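/- Let X, Y be uncertain variables with ⟦Y⟧ finite, δ* = (min over y ∈ ⟦Y⟧ of m_𝒳(⟦X|y⟧))/m_𝒳(⟦X⟧), and suppose the uncertainty function m_𝒳 is subadditive under finite unions (m(S₁∪S₂) ≤ m(S₁)+m(S₂)). If δ₁ < δ* and X and Y are associated at levels (δ₁/|⟦Y⟧|, δ₂), then for every y ∈ ⟦Y⟧ there exists a point x ∈ ⟦X|y⟧ such that x ∉ ⟦X|y′⟧ for every other conditional range ⟦X|y′⟧ ≠ ⟦X|y⟧. (Each conditional range has a point not covered by any other conditional range.) -/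

import Mathlib

open Set Real

namespace NSIT

variable {Ω 𝒳 𝒴 : Type*}

/-- The conditional range `⟦X|y⟧` of an uncertain variable `X` given that the
uncertain variable `Y` takes the value `y`. -/
def condRange (X : Ω → 𝒳) (Y : Ω → 𝒴) (y : 𝒴) : Set 𝒳 :=
  X '' {ω | Y ω = y}

/-- `m` is an uncertainty function: it vanishes on the empty set, is positive (and
finite, being real-valued) on nonempty sets, and is strongly transitive. -/
def IsUncertaintyFn (m : Set 𝒳 → ℝ) : Prop :=
  m ∅ = 0 ∧ (∀ S : Set 𝒳, S.Nonempty → 0 < m S) ∧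
    ∀ S₁ S₂ : Set 𝒳, max (m S₁) (m S₂) ≤ m (S₁ ∪ S₂)

/-- The set of association `𝒜(X;Y)`: all nonzero relative uncertainties of
intersections of two distinct conditional ranges of `X` given values of `Y`. -/
def assocSet (mX : Set 𝒳 → ℝ) (X : Ω → 𝒳) (Y : Ω → 𝒴) : Set ℝ :=
  {r | r ≠ 0 ∧ ∃ y₁ ∈ Set.range Y, ∃ y₂ ∈ Set.range Y, y₁ ≠ y₂ ∧
    r = mX (condRange X Y y₁ ∩ condRange X Y y₂) / mX (Set.range X)}

/-- `X` and `Y` are associated at levels `(δ₁, δ₂)`: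
`𝒜(X;Y) ⪯ δ₁` and `𝒜(Y;X) ⪯ δ₂` (vacuously true for empty association sets). -/
def Associated (mX : Set 𝒳 → ℝ) (mY : Set 𝒴 → ℝ) (X : Ω → 𝒳) (Y : Ω → 𝒴)
    (δ₁ δ₂ : ℝ) : Prop :=
  (∀ r ∈ assocSet mX X Y, r ≤ δ₁) ∧ ∀ r ∈ assocSet mY Y X, r ≤ δ₂

/-- `X` and `Y` are disassociated at levels `(δ₁, δ₂)`:
`𝒜(X;Y) ≻ δ₁` and `𝒜(Y;X) ≻ δ₂` (which in particular requires the association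
sets to be nonempty). -/
def Disassociated (mX : Set 𝒳 → ℝ) (mY : Set 𝒴 → ℝ) (X : Ω → 𝒳) (Y : Ω → 𝒴)
    (δ₁ δ₂ : ℝ) : Prop :=
  (assocSet mX X Y).Nonempty ∧ (∀ r ∈ assocSet mX X Y, δ₁ < r) ∧
    (assocSet mY Y X).Nonempty ∧ ∀ r ∈ assocSet mY Y X, δ₂ < r

/-- `x₁` and `x₂` are `δ`-connected via `⟦X|Y⟧`: there is a finite chain of
conditional ranges joining them whose consecutive intersections have relative
uncertainty greater than `δ`. -/
def Conn (mX : Set 𝒳 → ℝ) (X : Ω → 𝒳) (Y : Ω → 𝒴) (δ : ℝ) (x₁ x₂ : 𝒳) : Prop :=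
  ∃ (N : ℕ) (ys : Fin (N + 1) → 𝒴),
    x₁ ∈ condRange X Y (ys 0) ∧ x₂ ∈ condRange X Y (ys (Fin.last N)) ∧
    ∀ i : Fin N,
      δ < mX (condRange X Y (ys i.succ) ∩ condRange X Y (ys i.castSucc)) /
        mX (Set.range X)

/-- `F` is a `δ`-overlap family (for `X` given `Y`): it covers `⟦X⟧`, each member
is `δ`-connected and contains a singly `δ`-connected set of the form `⟦X|y⟧`,
any two distinct members overlap with uncertainty at most `δ · m(⟦X⟧)`, and every
conditional range `⟦X|y⟧` is contained in some member. -/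
def IsOverlapFamily (mX : Set 𝒳 → ℝ) (X : Ω → 𝒳) (Y : Ω → 𝒴) (δ : ℝ)
    (F : Set (Set 𝒳)) : Prop :=
  ⋃₀ F = Set.range X ∧
  (∀ S ∈ F, (∀ x₁ ∈ S, ∀ x₂ ∈ S, Conn mX X Y δ x₁ x₂) ∧
    ∃ y ∈ Set.range Y, condRange X Y y ⊆ S) ∧
  (∀ S₁ ∈ F, ∀ S₂ ∈ F, S₁ ≠ S₂ → mX (S₁ ∩ S₂) ≤ δ * mX (Set.range X)) ∧
  ∀ y ∈ Set.range Y, ∃ S ∈ F, condRange X Y y ⊆ S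

lemma m_biUnion_le {𝒳 ι : Type*} (m : Set 𝒳 → ℝ) (h0 : m ∅ = 0)
    (hsub : ∀ S₁ S₂ : Set 𝒳, m (S₁ ∪ S₂) ≤ m S₁ + m S₂) (s : Finset ι) (f : ι → Set 𝒳) :
    m (⋃ i ∈ s, f i) ≤ ∑ i ∈ s, m (f i) := by
  classical
  induction s using Finset.induction_on with
  | empty => simp [h0]
  | @insert a s ha ih =>
    rw [Finset.set_biUnion_insert, Finset.sum_insert ha]
    exact (hsub _ _).trans (by linarith)

/-- Lemma 7: suppose `m_𝒳` is subadditive under unions, `⟦Y⟧` is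
finite, `δ₁ < δ*`, and `X`, `Y` are associated at levels `(δ₁/|⟦Y⟧|, δ₂)`.
Then every conditional range `⟦X|y⟧` contains a point belonging to no other
conditional range. -/
theorem exists_private_point
    {Ω 𝒳 𝒴 : Type*} (mX : Set 𝒳 → ℝ) (mY : Set 𝒴 → ℝ)
    (hmX : IsUncertaintyFn mX) (hmY : IsUncertaintyFn mY)
    (hsub : ∀ S₁ S₂ : Set 𝒳, mX (S₁ ∪ S₂) ≤ mX S₁ + mX S₂)
    (X : Ω → 𝒳) (Y : Ω → 𝒴) (δ₁ δ₂ : ℝ)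
    (hYfin : (Set.range Y).Finite)
    (hδ₁ : δ₁ < sInf {r | ∃ y ∈ Set.range Y, r = mX (condRange X Y y)} /
      mX (Set.range X))
    (h : Associated mX mY X Y (δ₁ / ((Set.range Y).ncard : ℝ)) δ₂) :
    ∀ y ∈ Set.range Y, ∃ x ∈ condRange X Y y,
      ∀ y' ∈ Set.range Y, condRange X Y y' ≠ condRange X Y y →
        x ∉ condRange X Y y' := by
  classical
  intro y hy
  by_contra hcon
  push_neg at hcon
  obtain ⟨h0, hpos, htrans⟩ := hmX
  -- basic facts
  obtain ⟨ω, hω⟩ := hy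
  have hXne : (Set.range X).Nonempty := ⟨X ω, ⟨ω, rfl⟩⟩
  have hMpos : 0 < mX (Set.range X) := hpos _ hXne
  have hmono : ∀ A B : Set 𝒳, A ⊆ B → mX A ≤ mX B := by
    intro A B hAB
    have := htrans A B
    rw [Set.union_eq_right.mpr hAB] at this
    exact (le_max_left _ _).trans this
  have hYne : (Set.range Y).Nonempty := ⟨y, ω, hω⟩
  set n : ℝ := ((Set.range Y).ncard : ℝ) with hn
  have hnpos : 0 < n := by
    have : 0 < (Set.range Y).ncard := (Set.ncard_pos hYfin).mpr hYne
    rw [hn]; exact_mod_cast this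
  -- the infimum c
  set c := sInf {r | ∃ y ∈ Set.range Y, r = mX (condRange X Y y)} with hc
  have hsetfin : {r | ∃ y ∈ Set.range Y, r = mX (condRange X Y y)}.Finite := by
    have : {r | ∃ y ∈ Set.range Y, r = mX (condRange X Y y)} =
        (fun y => mX (condRange X Y y)) '' (Set.range Y) := by
      ext r; simp [eq_comm]
    rw [this]; exact hYfin.image _
  have hsetne : {r | ∃ y ∈ Set.range Y, r = mX (condRange X Y y)}.Nonempty :=
    ⟨mX (condRange X Y y), y, ⟨ω, hω⟩, rfl⟩
  have hcmem : c ∈ {r | ∃ y ∈ Set.range Y, r = mX (condRange X Y y)} :=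
    hsetne.csInf_mem hsetfin
  have hcpos : 0 < c := by
    obtain ⟨y', ⟨ω', hω'⟩, hr⟩ := hcmem
    rw [hr]
    exact hpos _ ⟨X ω', ω', hω', rfl⟩
  have hcle : c ≤ mX (condRange X Y y) :=
    csInf_le hsetfin.bddBelow ⟨y, ⟨ω, hω⟩, rfl⟩
  -- δ₁' := max δ₁ 0
  set δ₁' := max δ₁ 0 with hδ₁'
  have hδ₁'M : δ₁' * mX (Set.range X) < c := by
    have h1 : δ₁ * mX (Set.range X) < c := (lt_div_iff₀ hMpos).mp hδ₁
    rcases max_cases δ₁ 0 with ⟨he, _⟩ | ⟨he, _⟩ <;> rw [hδ₁', he] <;> simpa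
  -- the covering finset
  set S : Finset 𝒴 := hYfin.toFinset.filter
    (fun y' => condRange X Y y' ≠ condRange X Y y) with hS
  have hcover : condRange X Y y ⊆ ⋃ y' ∈ S, (condRange X Y y ∩ condRange X Y y') := by
    intro x hx
    obtain ⟨y', hy', hne, hxy'⟩ := hcon x hx
    exact Set.mem_biUnion (Finset.mem_filter.mpr ⟨hYfin.mem_toFinset.mpr hy', hne⟩) ⟨hx, hxy'⟩
  -- bound each term
  have hterm : ∀ y' ∈ S, mX (condRange X Y y ∩ condRange X Y y') ≤
      δ₁' / n * mX (Set.range X) := by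
    intro y' hy'S
    simp only [hS, Finset.mem_filter, Set.Finite.mem_toFinset] at hy'S
    obtain ⟨hy'r, hne⟩ := hy'S
    have hpos' : 0 ≤ δ₁' / n * mX (Set.range X) := by positivity
    set r := mX (condRange X Y y ∩ condRange X Y y') / mX (Set.range X) with hr
    by_cases hr0 : r = 0
    · have : mX (condRange X Y y ∩ condRange X Y y') = 0 := by
        rw [hr, div_eq_zero_iff] at hr0; exact hr0.resolve_right hMpos.ne'
      rw [this]; exact hpos'
    · have hyne : y ≠ y' := fun hh => hne (by rw [hh])
      have hmem : r ∈ assocSet mX X Y := ⟨hr0, y, ⟨ω, hω⟩, y', hy'r, hyne, rfl⟩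
      have := h.1 r hmem
      have hle : r ≤ δ₁' / n := this.trans (by
        gcongr
        exact le_max_left _ _)
      calc mX (condRange X Y y ∩ condRange X Y y') = r * mX (Set.range X) := by
            rw [hr, div_mul_cancel₀ _ hMpos.ne']
        _ ≤ δ₁' / n * mX (Set.range X) := by
            exact mul_le_mul_of_nonneg_right hle hMpos.le
  -- sum it up
  have hcard : (S.card : ℝ) ≤ n := by
    have : S.card ≤ hYfin.toFinset.card := Finset.card_filter_le _ _
    have h2 : (Set.range Y).ncard = hYfin.toFinset.card :=
      Set.ncard_eq_toFinset_card _ hYfin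
    rw [hn, h2]
    exact_mod_cast this
  have hchain : mX (condRange X Y y) ≤ δ₁' * mX (Set.range X) := by
    calc mX (condRange X Y y)
        ≤ mX (⋃ y' ∈ S, (condRange X Y y ∩ condRange X Y y')) := by
          apply hmono _ _ hcover
      _ ≤ ∑ y' ∈ S, mX (condRange X Y y ∩ condRange X Y y') :=
          m_biUnion_le mX h0 hsub S _
      _ ≤ ∑ _y' ∈ S, δ₁' / n * mX (Set.range X) := Finset.sum_le_sum hterm
      _ = (S.card : ℝ) * (δ₁' / n * mX (Set.range X)) := by
          rw [Finset.sum_const, nsmul_eq_mul]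
      _ ≤ n * (δ₁' / n * mX (Set.range X)) := by
          apply mul_le_mul_of_nonneg_right hcard (by positivity)
      _ = δ₁' * mX (Set.range X) := by field_simp
  linarith [hδ₁'M, hcle, hchain]

end NSIT
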